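/- arXiv:2008.07036 — 3 statements merged into one kernel-verified Lean document; each statement's English description precedes it below -/
import Mathlib

section
/- Let 0 < η < 1/e. There exists a constant C > 0 such that for every real z with z ≠ 0, the series ∑_{k=1}^∞ |sin(k z)| / k² converges and ∑_{k=1}^∞ |sin(k z)| / k² ≤ C·|z|·κ̃₁(|z|). -/
open Real

/-- `κ̃₁(x) = log(1/x)` for `0 < x ≤ η`, and `κ̃₁(x) = log(1/η) − 1 + η/x` for `x > η`. -/
noncomputable def kappa1 (η x : ℝ) : ℝ :=
  if x ≤ η then Real.log (1 / x) else Real.log (1 / η) - 1 + η / x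

lemma hs2 : Summable (fun k : ℕ => 1/((k:ℝ)+1)^2) := by
  have h := summable_one_div_nat_pow.mpr (by norm_num : 1 < 2)
  have := (summable_nat_add_iff (f := fun n : ℕ => 1/(n:ℝ)^2) 1).mpr h
  exact this.congr (by intro n; push_cast; ring_nf)

lemma tail_bound (N : ℕ) (hN : 1 ≤ N) :
    (∑' k : ℕ, 1/(((N:ℝ)+(k:ℝ))+1)^2) ≤ 1/(N:ℝ) := by
  have hN' : (1:ℝ) ≤ (N:ℝ) := by exact_mod_cast hN
  apply Real.tsum_le_of_sum_range_le (by intro k; positivity)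
  intro m
  have key : ∀ m : ℕ, ∑ k ∈ Finset.range m, 1/(((N:ℝ)+(k:ℝ))+1)^2 ≤ 1/(N:ℝ) - 1/((N:ℝ)+(m:ℝ)) := by
    intro m
    induction m with
    | zero => simp
    | succ m ih =>
      rw [Finset.sum_range_succ]
      have hm : (0:ℝ) ≤ (m:ℝ) := Nat.cast_nonneg m
      have h2 : (1:ℝ)/(((N:ℝ)+(m:ℝ))+1)^2 ≤ 1/((N:ℝ)+(m:ℝ)) - 1/((N:ℝ)+((m:ℝ)+1)) := by
        rw [div_sub_div _ _ (by linarith) (by linarith), div_le_div_iff₀ (by positivity) (by positivity)]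
        nlinarith [sq_nonneg ((N:ℝ)+(m:ℝ))]
      push_cast
      push_cast at ih
      linarith
  have hm : (0:ℝ) ≤ (m:ℝ) := Nat.cast_nonneg m
  have h3 : (0:ℝ) ≤ 1/((N:ℝ)+(m:ℝ)) := by positivity
  linarith [key m]

/-- For `0 < η < 1/e` there is `C > 0` such that for every `z ≠ 0`, the series
`∑_{k≥1} |sin(kz)|/k²` converges and is bounded by `C·|z|·κ̃₁(|z|)`. -/
theorem sum_abs_sin_div_sq_le (η : ℝ) (hη₀ : 0 < η) (hη₁ : η < 1 / Real.exp 1) :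
    ∃ C : ℝ, 0 < C ∧ ∀ z : ℝ, z ≠ 0 →
      Summable (fun k : ℕ => |Real.sin ((k + 1 : ℝ) * z)| / ((k : ℝ) + 1) ^ 2) ∧
      (∑' k : ℕ, |Real.sin ((k + 1 : ℝ) * z)| / ((k : ℝ) + 1) ^ 2) ≤
        C * |z| * kappa1 η |z| := by
  have hlη : 1 < Real.log (1/η) := by
    rw [Real.lt_log_iff_exp_lt (by positivity), lt_div_iff₀ hη₀]
    rw [lt_div_iff₀ (Real.exp_pos 1)] at hη₁
    linarith
  refine ⟨4 + 2/η, by positivity, fun z hz => ?_⟩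
  set C : ℝ := 4 + 2/η with hC
  set x : ℝ := |z| with hxdef
  have hx : 0 < x := abs_pos.mpr hz
  set f : ℕ → ℝ := fun k : ℕ => |Real.sin ((k + 1 : ℝ) * z)| / ((k : ℝ) + 1) ^ 2 with hfdef
  have hfnn : ∀ k, 0 ≤ f k := fun k => by positivity
  have hfle1 : ∀ k, f k ≤ 1/((k:ℝ)+1)^2 := by
    intro k
    apply div_le_div_of_nonneg_right ?_ (by positivity)
    · exact abs_le.mpr ⟨Real.neg_one_le_sin _, Real.sin_le_one _⟩
  have hf : Summable f := Summable.of_nonneg_of_le hfnn hfle1 hs2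
  refine ⟨hf, ?_⟩
  have hflex : ∀ k : ℕ, f k ≤ x/((k:ℝ)+1) := by
    intro k
    have h1 : |Real.sin ((k + 1 : ℝ) * z)| ≤ ((k:ℝ)+1)*x := by
      calc |Real.sin ((k + 1 : ℝ) * z)| ≤ |((k:ℝ) + 1) * z| := Real.abs_sin_le_abs
        _ = ((k:ℝ)+1)*x := by rw [abs_mul, abs_of_nonneg (by positivity : (0:ℝ) ≤ (k:ℝ)+1)]
    rw [hfdef]
    simp only
    rw [div_le_div_iff₀ (by positivity) (by positivity)]
    nlinarith [abs_nonneg (Real.sin ((k + 1 : ℝ) * z)), (show (0:ℝ) < (k:ℝ)+1 by positivity)]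
  by_cases hxη : x ≤ η
  · -- small case
    rw [kappa1, if_pos hxη]
    have hx1 : (1:ℝ) ≤ 1/x := by
      rw [le_div_iff₀ hx]
      have h1e : 1/Real.exp 1 ≤ 1 := by
        rw [div_le_one (Real.exp_pos 1)]
        linarith [Real.exp_one_gt_d9]
      linarith
    have hlx : 1 < Real.log (1/x) := by
      calc (1:ℝ) < Real.log (1/η) := hlη
        _ ≤ Real.log (1/x) := Real.log_le_log (by positivity) (by
            apply one_div_le_one_div_of_le hx hxη)
    set N : ℕ := ⌊1/x⌋₊ with hNdef
    have hN1 : 1 ≤ N := Nat.le_floor (by exact_mod_cast hx1)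
    have hN0 : (0:ℝ) < (N:ℝ) := by exact_mod_cast hN1
    have hNx : (N:ℝ) ≤ 1/x := Nat.floor_le (by positivity)
    have hxN : 1/x < (N:ℝ)+1 := Nat.lt_floor_add_one _
    have h1N : 1/(N:ℝ) ≤ 2*x := by
      rw [div_le_iff₀ hN0]
      rw [div_lt_iff₀ hx] at hxN
      have hN1' : (1:ℝ) ≤ (N:ℝ) := by exact_mod_cast hN1
      nlinarith [mul_nonneg hx.le (sub_nonneg.mpr hN1')]
    -- split
    have hsplit := Summable.sum_add_tsum_nat_add (f := f) N hf
    -- head bound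
    have hharm : ((harmonic N : ℚ):ℝ) = ∑ k ∈ Finset.range N, ((k:ℝ)+1)⁻¹ := by
      rw [harmonic]
      push_cast
      rfl
    have hhead : ∑ k ∈ Finset.range N, f k ≤ x * (1 + Real.log (1/x)) := by
      calc ∑ k ∈ Finset.range N, f k ≤ ∑ k ∈ Finset.range N, x * ((k:ℝ)+1)⁻¹ := by
            apply Finset.sum_le_sum
            intro k _
            rw [mul_comm, ← div_eq_inv_mul]
            exact hflex k
        _ = x * ((harmonic N : ℚ):ℝ) := by rw [hharm, Finset.mul_sum]
        _ ≤ x * (1 + Real.log N) := by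
            apply mul_le_mul_of_nonneg_left (harmonic_le_one_add_log N) hx.le
        _ ≤ x * (1 + Real.log (1/x)) := by
            apply mul_le_mul_of_nonneg_left _ hx.le
            have := Real.log_le_log hN0 hNx
            linarith
    -- tail bound
    have htails : Summable (fun i : ℕ => f (i + N)) := (summable_nat_add_iff N).2 hf
    have hgs : Summable (fun i : ℕ => 1/(((N:ℝ)+(i:ℝ))+1)^2) := by
      apply ((summable_nat_add_iff (f := fun k : ℕ => 1/((k:ℝ)+1)^2) N).2 hs2).congr
      intro n; push_cast; ring_nf
    have htail : (∑' i : ℕ, f (i + N)) ≤ 2*x := by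
      calc (∑' i : ℕ, f (i + N)) ≤ ∑' i : ℕ, 1/(((N:ℝ)+(i:ℝ))+1)^2 := by
            apply Summable.tsum_le_tsum _ htails hgs
            intro i
            have h := hfle1 (i+N)
            have he : (1:ℝ)/(((i+N:ℕ):ℝ)+1)^2 = 1/(((N:ℝ)+(i:ℝ))+1)^2 := by push_cast; ring_nf
            calc f (i+N) ≤ 1/(((i+N:ℕ):ℝ)+1)^2 := h
              _ = _ := he
        _ ≤ 1/(N:ℝ) := tail_bound N hN1
        _ ≤ 2*x := h1N
    have htot : (∑' k, f k) ≤ x * (3 + Real.log (1/x)) := by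
      rw [← hsplit]
      calc ∑ k ∈ Finset.range N, f k + (∑' i : ℕ, f (i + N))
          ≤ x * (1 + Real.log (1/x)) + 2*x := add_le_add hhead htail
        _ = x * (3 + Real.log (1/x)) := by ring
    calc (∑' k, f k) ≤ x * (3 + Real.log (1/x)) := htot
      _ ≤ C * x * Real.log (1/x) := by
          rw [hC]
          have h2η : (0:ℝ) < 2/η := by positivity
          nlinarith [mul_pos hx (show (0:ℝ) < Real.log (1/x) by linarith)]
  · -- large case
    push_neg at hxη
    rw [kappa1, if_neg (not_le.mpr hxη)]
    have h2 : (∑' k, f k) ≤ 2 := by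
      have hle : (∑' k, f k) ≤ ∑' k : ℕ, 1/((k:ℝ)+1)^2 := Summable.tsum_le_tsum hfle1 hf hs2
      have hsplit := Summable.sum_add_tsum_nat_add (f := fun k : ℕ => 1/((k:ℝ)+1)^2) 1 hs2
      have hgs : Summable (fun i : ℕ => 1/(((1:ℕ):ℝ)+(i:ℝ)+1)^2) := by
        apply ((summable_nat_add_iff (f := fun k : ℕ => 1/((k:ℝ)+1)^2) 1).2 hs2).congr
        intro n; push_cast; ring_nf
      have htail : (∑' i : ℕ, 1/(((i+1:ℕ):ℝ)+1)^2) ≤ 1 := by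
        have hb := tail_bound 1 le_rfl
        have : (∑' i : ℕ, 1/(((i+1:ℕ):ℝ)+1)^2) = ∑' i : ℕ, 1/((((1:ℕ):ℝ)+(i:ℝ))+1)^2 := by
          apply tsum_congr; intro n; push_cast; ring_nf
        rw [this]
        simpa using hb
      have hhead : ∑ k ∈ Finset.range 1, 1/((k:ℝ)+1)^2 = 1 := by norm_num
      rw [← hsplit] at hle
      rw [hhead] at hle
      linarith
    have hxne : x ≠ 0 := hx.ne'
    have hdm : η / x * x = η := div_mul_cancel₀ η hxne
    have hCη : 2 ≤ C * η := by
      rw [hC]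
      have : 2/η * η = 2 := div_mul_cancel₀ 2 hη₀.ne'
      nlinarith
    have hnn : 0 ≤ C * x * (Real.log (1/η) - 1) := by
      apply mul_nonneg (mul_nonneg (by positivity) hx.le)
      linarith
    have h3 : C * x * (η/x) = C * η := by rw [mul_assoc, mul_comm x, hdm]
    have expand : C * x * (Real.log (1/η) - 1 + η/x)
        = C*x*(Real.log (1/η)-1) + C*x*(η/x) := by ring
    rw [expand, h3]
    have hfin : (2:ℝ) ≤ C*x*(Real.log (1/η)-1) + C*η :=
      hCη.trans (le_add_of_nonneg_left hnn)
    exact h2.trans hfin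
end

section
/- Let 0 < η < 1/e. There exists a constant C > 0 such that for all real x, y with x ≠ y, the series ∑_{k=1}^∞ (sin(k x) − sin(k y))² / k³ converges and ∑_{k=1}^∞ (sin(k x) − sin(k y))² / k³ ≤ C·(x − y)²·κ̃₂(|x − y|). -/
open Real

/-- `κ̃₂(x) = log(1/x)` for `0 < x ≤ η`, and for `x > η`,
`κ̃₂(x) = (((log(1/η))^{1/2} − (1/2)(log(1/η))^{−1/2})·x + (1/2)(log(1/η))^{−1/2}·η)² / x²`. -/
noncomputable def kappa2 (η x : ℝ) : ℝ :=
  if x ≤ η then Real.log (1 / x)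
  else ((Real.sqrt (Real.log (1 / η)) - (1 / 2) * (Real.sqrt (Real.log (1 / η)))⁻¹) * x
        + (1 / 2) * (Real.sqrt (Real.log (1 / η)))⁻¹ * η) ^ 2 / x ^ 2

lemma aux_sin_diff_le (a b : ℝ) : |Real.sin a - Real.sin b| ≤ |a - b| := by
  rw [Real.sin_sub_sin]
  calc |2 * Real.sin ((a - b)/2) * Real.cos ((a + b)/2)|
      = 2 * |Real.sin ((a-b)/2)| * |Real.cos ((a+b)/2)| := by
        rw [abs_mul, abs_mul]; norm_num
    _ ≤ 2 * |(a-b)/2| * 1 := by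
        have h1 := Real.abs_sin_le_abs (x := (a-b)/2)
        have h2 := Real.abs_cos_le_one ((a+b)/2)
        nlinarith [abs_nonneg ((a-b)/2), abs_nonneg (Real.sin ((a-b)/2))]
    _ = |a - b| := by rw [abs_div, abs_two]; ring

lemma aux_cube_step (a : ℝ) (ha : 1 ≤ a) :
    1/(a+1)^3 ≤ 1/(2*a*(a+1)) - 1/(2*(a+1)*(a+2)) := by
  have h0 : (0:ℝ) < a := by linarith
  have d1 : (0:ℝ) < 2*a*(a+1) := by nlinarith
  have d2 : (0:ℝ) < 2*(a+1)*(a+2) := by nlinarith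
  have p3 : (0:ℝ) < (a+1)^3 := by positivity
  rw [div_sub_div _ _ d1.ne' d2.ne', div_le_div_iff₀ p3 (mul_pos d1 d2)]
  nlinarith [sq_nonneg (a+1), sq_nonneg a, mul_pos h0 (mul_pos d1 d2)]

lemma aux_tail_cube (N : ℕ) (hN : 1 ≤ N) :
    ∑' i : ℕ, (1:ℝ) / ((i:ℝ) + N + 1)^3 ≤ 1 / (2 * (N:ℝ)^2) := by
  have hN1 : (1:ℝ) ≤ (N:ℝ) := by exact_mod_cast hN
  have key : ∀ n : ℕ, ∑ i ∈ Finset.range n, (1:ℝ) / ((i:ℝ) + N + 1)^3 ≤ 1 / (2 * (N:ℝ)^2) := by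
    intro n
    set g : ℝ → ℝ := fun a => 1 / (2 * a * (a + 1)) with hg
    set G : ℕ → ℝ := fun i => g ((i:ℝ) + N) with hG
    have hstep : ∀ i : ℕ, (1:ℝ) / ((i:ℝ) + N + 1)^3 ≤ G i - G (i+1) := by
      intro i
      have hm : (1:ℝ) ≤ (i:ℝ) + N := by
        have : (0:ℝ) ≤ (i:ℝ) := Nat.cast_nonneg i
        linarith
      have harg : ((i+1:ℕ):ℝ) + N = ((i:ℝ) + N) + 1 := by push_cast; ring
      have hkey := aux_cube_step ((i:ℝ) + N) hm
      simp only [hG, harg, hg]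
      calc (1:ℝ) / ((i:ℝ) + N + 1)^3
          ≤ 1 / (2 * ((i:ℝ)+N) * (((i:ℝ)+N) + 1)) -
            1 / (2 * (((i:ℝ)+N) + 1) * (((i:ℝ)+N) + 2)) := hkey
        _ = 1 / (2 * ((i:ℝ)+N) * ((i:ℝ)+N + 1)) -
            1 / (2 * ((i:ℝ)+N+1) * ((i:ℝ)+N+1 + 1)) := by ring_nf
    calc ∑ i ∈ Finset.range n, (1:ℝ) / ((i:ℝ) + N + 1)^3
        ≤ ∑ i ∈ Finset.range n, (G i - G (i+1)) := Finset.sum_le_sum fun i _ => hstep i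
      _ = G 0 - G n := Finset.sum_range_sub' G n
      _ ≤ G 0 := by
          have : 0 ≤ G n := by
            simp only [hG, hg]
            positivity
          linarith
      _ ≤ 1 / (2 * (N:ℝ)^2) := by
          simp only [hG, hg]
          push_cast
          rw [div_le_div_iff₀ (by nlinarith) (by nlinarith)]
          nlinarith
  exact Real.tsum_le_of_sum_range_le (fun n => by positivity) key

lemma aux_summable_base : Summable (fun n : ℕ => 1 / ((n+1:ℕ):ℝ)^3) :=
  (summable_nat_add_iff (f := fun n : ℕ => 1/(n:ℝ)^3) 1).mpr
    (Real.summable_one_div_nat_pow.mpr (by norm_num))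

lemma aux_summable_g : Summable (fun k : ℕ => (4:ℝ)/((k:ℝ)+1)^3) :=
  (aux_summable_base.mul_left 4).congr (fun n => by push_cast; ring)

lemma aux_sq_le_four (a b : ℝ) : (Real.sin a - Real.sin b)^2 ≤ 4 := by
  nlinarith [Real.neg_one_le_sin a, Real.sin_le_one a, Real.neg_one_le_sin b, Real.sin_le_one b]

lemma aux_summable_term (x y : ℝ) :
    Summable (fun k : ℕ =>
      (Real.sin ((k + 1 : ℝ) * x) - Real.sin ((k + 1 : ℝ) * y)) ^ 2 / ((k : ℝ) + 1) ^ 3) := by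
  apply Summable.of_nonneg_of_le (fun k => by positivity) _ aux_summable_g
  intro k
  gcongr
  exact aux_sq_le_four _ _

lemma aux_tsum_le_six (x y : ℝ) :
    (∑' k : ℕ,
        (Real.sin ((k + 1 : ℝ) * x) - Real.sin ((k + 1 : ℝ) * y)) ^ 2 / ((k : ℝ) + 1) ^ 3) ≤ 6 := by
  have h1 : (∑' k : ℕ,
      (Real.sin ((k + 1 : ℝ) * x) - Real.sin ((k + 1 : ℝ) * y)) ^ 2 / ((k : ℝ) + 1) ^ 3)
      ≤ ∑' k : ℕ, (4:ℝ)/((k:ℝ)+1)^3 := by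
    apply Summable.tsum_le_tsum _ (aux_summable_term x y) aux_summable_g
    intro k
    gcongr
    exact aux_sq_le_four _ _
  have h2 : (∑' k : ℕ, (4:ℝ)/((k:ℝ)+1)^3) ≤ 6 := by
    have hsplit := Summable.sum_add_tsum_nat_add (f := fun k : ℕ => (4:ℝ)/((k:ℝ)+1)^3) 1 aux_summable_g
    rw [← hsplit]
    have htail : (∑' i : ℕ, (4:ℝ)/(((i+1:ℕ):ℝ)+1)^3) ≤ 2 := by
      have he : (∑' i : ℕ, (4:ℝ)/(((i+1:ℕ):ℝ)+1)^3)
          = 4 * ∑' i : ℕ, (1:ℝ) / ((i:ℝ) + (1:ℕ) + 1)^3 := by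
        rw [← tsum_mul_left]
        apply tsum_congr
        intro i
        push_cast
        ring
      rw [he]
      have := aux_tail_cube 1 le_rfl
      nlinarith [this]
    have hhead : (∑ i ∈ Finset.range 1, (4:ℝ)/((i:ℝ)+1)^3) = 4 := by simp
    rw [hhead]
    linarith [htail]
  linarith

lemma aux_core (x y : ℝ) (hxy : x ≠ y) (hr1 : |x - y| ≤ 1) :
    (∑' k : ℕ,
        (Real.sin ((k + 1 : ℝ) * x) - Real.sin ((k + 1 : ℝ) * y)) ^ 2 / ((k : ℝ) + 1) ^ 3)
      ≤ (x - y)^2 * (4 + Real.log (1 / |x - y|)) := by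
  set r : ℝ := |x - y| with hrdef
  have hr : 0 < r := abs_pos.mpr (sub_ne_zero.mpr hxy)
  have h1r : 1 ≤ 1/r := by rw [le_div_iff₀ hr]; linarith
  set N : ℕ := ⌈1/r⌉₊ with hNdef
  have hNr : 1/r ≤ (N:ℝ) := Nat.le_ceil _
  have hN1 : 1 ≤ N := by
    have : (1:ℝ) ≤ (N:ℝ) := le_trans h1r hNr
    exact_mod_cast this
  have hNpos : (0:ℝ) < (N:ℝ) := by
    have : (1:ℝ) ≤ (N:ℝ) := by exact_mod_cast hN1
    linarith
  have hN2 : (N:ℝ) ≤ 2/r := by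
    have := Nat.ceil_lt_add_one (show (0:ℝ) ≤ 1/r by positivity)
    have h2 : 1/r + 1 ≤ 2/r := by
      rw [div_add' _ _ _ hr.ne', div_le_div_iff₀ hr hr]
      nlinarith
    linarith
  have hLr0 : 0 ≤ Real.log (1/r) := Real.log_nonneg h1r
  set f : ℕ → ℝ := fun k : ℕ =>
    (Real.sin ((k + 1 : ℝ) * x) - Real.sin ((k + 1 : ℝ) * y)) ^ 2 / ((k : ℝ) + 1) ^ 3 with hf
  have hsum : Summable f := aux_summable_term x y
  have hsplit := Summable.sum_add_tsum_nat_add (f := f) N hsum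
  -- head bound
  have hterm : ∀ i : ℕ, f i ≤ r^2 * ((i:ℝ)+1)⁻¹ := by
    intro i
    have hd : |Real.sin ((i + 1 : ℝ) * x) - Real.sin ((i + 1 : ℝ) * y)| ≤ ((i:ℝ)+1) * r := by
      calc |Real.sin ((i + 1 : ℝ) * x) - Real.sin ((i + 1 : ℝ) * y)|
          ≤ |((i:ℝ)+1) * x - ((i:ℝ)+1) * y| := aux_sin_diff_le _ _
        _ = ((i:ℝ)+1) * r := by
            rw [← mul_sub, abs_mul, abs_of_nonneg (by positivity : (0:ℝ) ≤ (i:ℝ)+1)]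
    have hnum : (Real.sin ((i + 1 : ℝ) * x) - Real.sin ((i + 1 : ℝ) * y))^2
        ≤ (((i:ℝ)+1) * r)^2 := by
      rw [← sq_abs]
      exact pow_le_pow_left₀ (abs_nonneg _) hd 2
    have hi : (0:ℝ) < (i:ℝ)+1 := by positivity
    calc f i ≤ (((i:ℝ)+1) * r)^2 / ((i:ℝ)+1)^3 := by
          simp only [hf]
          gcongr
        _ = r^2 * ((i:ℝ)+1)⁻¹ := by field_simp
  have hharm : ((harmonic N : ℚ):ℝ) = ∑ i ∈ Finset.range N, ((i:ℝ)+1)⁻¹ := by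
    unfold harmonic
    push_cast
    rfl
  have hhead : (∑ i ∈ Finset.range N, f i) ≤ r^2 * (2 + Real.log (1/r)) := by
    calc (∑ i ∈ Finset.range N, f i)
        ≤ ∑ i ∈ Finset.range N, r^2 * ((i:ℝ)+1)⁻¹ := Finset.sum_le_sum fun i _ => hterm i
      _ = r^2 * ((harmonic N : ℚ):ℝ) := by rw [hharm, Finset.mul_sum]
      _ ≤ r^2 * (1 + Real.log N) :=
          mul_le_mul_of_nonneg_left (harmonic_le_one_add_log N) (sq_nonneg r)
      _ ≤ r^2 * (2 + Real.log (1/r)) := by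
          apply mul_le_mul_of_nonneg_left _ (sq_nonneg r)
          have hlog1 : Real.log N ≤ Real.log (2/r) := Real.log_le_log hNpos hN2
          have hlog2 : Real.log (2/r) = Real.log 2 + Real.log (1/r) := by
            rw [show (2:ℝ)/r = 2 * (1/r) by ring]
            exact Real.log_mul two_ne_zero (by positivity)
          have hlog3 : Real.log 2 ≤ 1 := by
            have := Real.log_le_sub_one_of_pos (show (0:ℝ) < 2 by norm_num)
            linarith
          linarith
  -- tail bound
  have hsumf : Summable (fun i : ℕ => f (i + N)) :=
    (summable_nat_add_iff (f := f) N).mpr hsum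
  have hsumg : Summable (fun i : ℕ => (4:ℝ)/((i:ℝ) + N + 1)^3) := by
    apply ((summable_nat_add_iff (f := fun k : ℕ => (4:ℝ)/((k:ℝ)+1)^3) N).mpr
      aux_summable_g).congr
    intro i
    push_cast
    ring_nf
  have htail : (∑' i : ℕ, f (i + N)) ≤ 2 * r^2 := by
    have hstep1 : (∑' i : ℕ, f (i + N)) ≤ ∑' i : ℕ, (4:ℝ)/((i:ℝ) + N + 1)^3 := by
      apply Summable.tsum_le_tsum _ hsumf hsumg
      intro i
      simp only [hf]
      have hc : (((i + N : ℕ):ℝ) + 1) = (i:ℝ) + N + 1 := by push_cast; ring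
      rw [hc]
      gcongr
      exact aux_sq_le_four _ _
    have hstep2 : (∑' i : ℕ, (4:ℝ)/((i:ℝ) + N + 1)^3) ≤ 2 / (N:ℝ)^2 := by
      have he : (∑' i : ℕ, (4:ℝ)/((i:ℝ) + N + 1)^3)
          = 4 * ∑' i : ℕ, (1:ℝ)/((i:ℝ) + N + 1)^3 := by
        rw [← tsum_mul_left]
        apply tsum_congr
        intro i
        ring
      rw [he]
      have htc := aux_tail_cube N hN1
      have heq : 4 * (1/(2*(N:ℝ)^2)) = 2/(N:ℝ)^2 := by
        rw [mul_one_div, div_eq_div_iff (by positivity) (by positivity)]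
        ring
      calc 4 * (∑' i : ℕ, (1:ℝ)/((i:ℝ) + N + 1)^3)
          ≤ 4 * (1/(2*(N:ℝ)^2)) := by linarith
        _ = 2/(N:ℝ)^2 := heq
    have hstep3 : 2 / (N:ℝ)^2 ≤ 2 * r^2 := by
      rw [div_le_iff₀ (by positivity)]
      have hrN : 1 ≤ r * N := by
        have := hNr
        rw [div_le_iff₀ hr] at this
        linarith [this]
      nlinarith [hrN, hr, hNpos]
    linarith
  have hxy2 : (x - y)^2 = r^2 := (sq_abs (x-y)).symm
  calc (∑' k : ℕ, f k) = (∑ i ∈ Finset.range N, f i) + ∑' i : ℕ, f (i + N) := hsplit.symm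
    _ ≤ r^2 * (2 + Real.log (1/r)) + 2 * r^2 := add_le_add hhead htail
    _ = r^2 * (4 + Real.log (1/r)) := by ring
    _ = (x - y)^2 * (4 + Real.log (1/r)) := by rw [hxy2]

lemma aux_kappa2_quarter (η r : ℝ) (hη0 : 0 < η) (hL : 1 ≤ Real.log (1/η)) (hr : 0 < r) :
    1/4 ≤ kappa2 η r := by
  unfold kappa2
  split_ifs with h
  · have h1 : Real.log (1/η) ≤ Real.log (1/r) :=
      Real.log_le_log (by positivity) (one_div_le_one_div_of_le hr h)
    linarith
  · push_neg at h
    set L := Real.log (1/η) with hLdef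
    have hsL : 1 ≤ Real.sqrt L := (Real.le_sqrt' one_pos).mpr (by nlinarith)
    have hsLpos : 0 < Real.sqrt L := by linarith
    have hinv : (Real.sqrt L)⁻¹ ≤ 1 := by
      rw [inv_le_one_iff₀]
      right; exact hsL
    have hinvpos : 0 < (Real.sqrt L)⁻¹ := by positivity
    have ha : 1/2 ≤ Real.sqrt L - 1/2 * (Real.sqrt L)⁻¹ := by linarith
    have hb : 0 ≤ 1/2 * (Real.sqrt L)⁻¹ * η := by positivity
    rw [le_div_iff₀ (by positivity : (0:ℝ) < r^2)]
    nlinarith [mul_le_mul_of_nonneg_right ha hr.le, sq_nonneg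
      ((Real.sqrt L - 1/2 * (Real.sqrt L)⁻¹) * r + 1/2 * (Real.sqrt L)⁻¹ * η - r/2)]

lemma aux_kappa2_of_le (η r : ℝ) (h : r ≤ η) : kappa2 η r = Real.log (1/r) := by
  simp [kappa2, h]

/-- Non-Lipschitz estimate for the diffusion coefficient with components
`sin(t)·k^{−3/2}·sin(kx)`: for `0 < η < 1/e` there is `C > 0` such that for all
`x ≠ y`, the series `∑_{k≥1} (sin(kx) − sin(ky))²/k³` converges and is bounded by
`C·(x−y)²·κ̃₂(|x−y|)`. -/
theorem sum_sin_diff_sq_div_cube_le (η : ℝ) (hη₀ : 0 < η) (hη₁ : η < 1 / Real.exp 1) :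
    ∃ C : ℝ, 0 < C ∧ ∀ x y : ℝ, x ≠ y →
      Summable (fun k : ℕ =>
        (Real.sin ((k + 1 : ℝ) * x) - Real.sin ((k + 1 : ℝ) * y)) ^ 2 / ((k : ℝ) + 1) ^ 3) ∧
      (∑' k : ℕ,
        (Real.sin ((k + 1 : ℝ) * x) - Real.sin ((k + 1 : ℝ) * y)) ^ 2 / ((k : ℝ) + 1) ^ 3) ≤
        C * (x - y) ^ 2 * kappa2 η |x - y| := by
  set L := Real.log (1/η) with hLdef
  have he : Real.exp 1 < 1/η := by
    rw [lt_div_iff₀ hη₀]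
    have := (lt_div_iff₀ (Real.exp_pos 1)).mp hη₁
    nlinarith [this]
  have hL : 1 < L := by
    calc (1:ℝ) = Real.log (Real.exp 1) := (Real.log_exp 1).symm
      _ < Real.log (1/η) := Real.log_lt_log (Real.exp_pos 1) he
  refine ⟨45 + 4 * L, by linarith, ?_⟩
  intro x y hxy
  refine ⟨aux_summable_term x y, ?_⟩
  set r : ℝ := |x - y| with hrdef
  have hr : 0 < r := abs_pos.mpr (sub_ne_zero.mpr hxy)
  have hq : 1/4 ≤ kappa2 η r := aux_kappa2_quarter η r hη₀ hL.le hr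
  have hCpos : (0:ℝ) < 45 + 4 * L := by linarith
  rcases le_or_gt r 1 with h1 | h1
  · have hcore := aux_core x y hxy h1
    rcases le_or_gt r η with hle | hle
    · -- r ≤ η
      rw [aux_kappa2_of_le η r hle]
      have hlog : L ≤ Real.log (1/r) :=
        Real.log_le_log (by positivity) (one_div_le_one_div_of_le hr hle)
      have hlog1 : 1 ≤ Real.log (1/r) := by linarith
      have h5 : 4 + Real.log (1/r) ≤ (45 + 4 * L) * Real.log (1/r) := by nlinarith
      calc (∑' k : ℕ,
            (Real.sin ((k + 1 : ℝ) * x) - Real.sin ((k + 1 : ℝ) * y)) ^ 2 / ((k : ℝ) + 1) ^ 3)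
          ≤ (x - y)^2 * (4 + Real.log (1/r)) := hcore
        _ ≤ (x - y)^2 * ((45 + 4 * L) * Real.log (1/r)) :=
            mul_le_mul_of_nonneg_left h5 (sq_nonneg _)
        _ = (45 + 4 * L) * (x - y)^2 * Real.log (1/r) := by ring
    · -- η < r ≤ 1
      have hlogle : Real.log (1/r) ≤ L :=
        Real.log_le_log (by positivity) (one_div_le_one_div_of_le hη₀ hle.le)
      have hq' : (45 + 4 * L) * (1/4) ≤ (45 + 4 * L) * kappa2 η r :=
        mul_le_mul_of_nonneg_left hq hCpos.le
      have h5 : 4 + Real.log (1/r) ≤ (45 + 4 * L) * kappa2 η r := by nlinarith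
      calc (∑' k : ℕ,
            (Real.sin ((k + 1 : ℝ) * x) - Real.sin ((k + 1 : ℝ) * y)) ^ 2 / ((k : ℝ) + 1) ^ 3)
          ≤ (x - y)^2 * (4 + Real.log (1/r)) := hcore
        _ ≤ (x - y)^2 * ((45 + 4 * L) * kappa2 η r) :=
            mul_le_mul_of_nonneg_left h5 (sq_nonneg _)
        _ = (45 + 4 * L) * (x - y)^2 * kappa2 η r := by ring
  · -- r > 1
    have hsix := aux_tsum_le_six x y
    have hx1 : 1 ≤ (x - y)^2 := by
      rw [← sq_abs]
      nlinarith
    have e1 : (45 + 4 * L) * (x - y)^2 * (1/4) ≤ (45 + 4 * L) * (x - y)^2 * kappa2 η r :=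
      mul_le_mul_of_nonneg_left hq (by positivity)
    have e2 : (45 + 4 * L) * 1 * (1/4) ≤ (45 + 4 * L) * (x - y)^2 * (1/4) := by nlinarith
    calc (∑' k : ℕ,
          (Real.sin ((k + 1 : ℝ) * x) - Real.sin ((k + 1 : ℝ) * y)) ^ 2 / ((k : ℝ) + 1) ^ 3)
        ≤ 6 := hsix
      _ ≤ (45 + 4 * L) * (x - y)^2 * kappa2 η r := by linarith
end

section
/- Let 0 < η < 1/e and let p ≥ 1 be a real number. There exists a constant C > 0 such that for all x > 0: x^{2p}·κ̃₂(x) ≤ C·ρ_η(x^{2p}). -/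
open Real

/-- `ρ_η(x) = x·log(1/x)` for `0 < x ≤ η`, `ρ_η(0) = 0`, and
`ρ_η(x) = η·log(1/η) + (log(1/η) − 1)·(x − η)` for `x > η`. -/
noncomputable def rhoEta (η x : ℝ) : ℝ :=
  if x ≤ 0 then 0
  else if x ≤ η then x * Real.log (1 / x)
  else η * Real.log (1 / η) + (Real.log (1 / η) - 1) * (x - η)

/-- For `0 < η < 1/e` and real `p ≥ 1`, there is `C > 0` with
`x^{2p}·κ̃₂(x) ≤ C·ρ_η(x^{2p})` for all `x > 0`. -/
theorem kappa2_le_rhoEta (η p : ℝ) (hη₀ : 0 < η) (hη₁ : η < 1 / Real.exp 1)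
    (hp : 1 ≤ p) :
    ∃ C : ℝ, 0 < C ∧ ∀ x : ℝ, 0 < x →
      x ^ (2 * p) * kappa2 η x ≤ C * rhoEta η (x ^ (2 * p)) := by
  have hexp1 : (1:ℝ) < Real.exp 1 := by
    have := Real.exp_one_gt_d9; linarith
  have hη1 : η < 1 := by
    have : 1 / Real.exp 1 < 1 := by
      rw [div_lt_one (Real.exp_pos 1)]; exact hexp1
    linarith
  have hL : 1 < Real.log (1 / η) := by
    rw [Real.lt_log_iff_exp_lt (by positivity)]
    rw [lt_div_iff₀ (Real.exp_pos 1)] at hη₁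
    rw [lt_div_iff₀ hη₀]
    nlinarith
  set L := Real.log (1 / η) with hLdef
  set s := Real.sqrt L with hsdef
  have hs2 : s ^ 2 = L := Real.sq_sqrt (by linarith)
  have hs1 : 1 < s := by
    have h := Real.sqrt_lt_sqrt (by norm_num : (0:ℝ) ≤ 1) hL
    simpa using h
  have hsinv : s⁻¹ ≤ 1 := by
    rw [inv_le_one_iff₀]; right; linarith
  have hsinv0 : 0 < s⁻¹ := by positivity
  refine ⟨L / (L - 1), div_pos (by linarith) (by linarith), fun x hx => ?_⟩
  set C := L / (L - 1) with hCdef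
  have hC1 : 1 ≤ C := by
    rw [hCdef, le_div_iff₀ (by linarith)]; linarith
  have hCL : C * (L - 1) = L := div_mul_cancel₀ _ (by linarith)
  set y := x ^ (2 * p) with hydef
  have hy0 : 0 < y := Real.rpow_pos_of_pos hx _
  have hp2 : (2:ℝ) ≤ 2 * p := by linarith
  by_cases hxη : x ≤ η
  · -- region x ≤ η
    have hx1 : x < 1 := lt_of_le_of_lt hxη hη1
    have hyx : y ≤ x := by
      calc y = x ^ (2 * p) := rfl
        _ ≤ x ^ (1:ℝ) := Real.rpow_le_rpow_of_exponent_ge hx hx1.le (by linarith)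
        _ = x := Real.rpow_one x
    have hyη : y ≤ η := hyx.trans hxη
    rw [kappa2, rhoEta, if_pos hxη, if_neg (not_le.2 hy0), if_pos hyη]
    have hlogy : Real.log (1 / y) = (2 * p) * Real.log (1 / x) := by
      rw [one_div, one_div, Real.log_inv, Real.log_inv, hydef, Real.log_rpow hx]
      ring
    rw [hlogy]
    have hlx : 0 ≤ Real.log (1 / x) := by
      rw [one_div, Real.log_inv]
      have := Real.log_nonpos hx.le hx1.le
      linarith
    have h1 : 1 ≤ C * (2 * p) := by nlinarith
    nlinarith [mul_le_mul_of_nonneg_right h1 (mul_nonneg hy0.le hlx)]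
  · -- region η < x
    push_neg at hxη
    rw [kappa2, if_neg (not_le.2 hxη), ← hLdef, ← hsdef]
    have ha : 0 ≤ s - 1 / 2 * s⁻¹ := by linarith
    have hb : 0 ≤ 1 / 2 * s⁻¹ * η := by positivity
    have hub : (s - 1 / 2 * s⁻¹) * x + 1 / 2 * s⁻¹ * η ≤ s * x := by
      have : 1 / 2 * s⁻¹ * η ≤ 1 / 2 * s⁻¹ * x := by nlinarith
      nlinarith
    have hlb : 0 ≤ (s - 1 / 2 * s⁻¹) * x + 1 / 2 * s⁻¹ * η := by
      have := mul_nonneg ha hx.le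
      linarith
    have hκ : ((s - 1 / 2 * s⁻¹) * x + 1 / 2 * s⁻¹ * η) ^ 2 / x ^ 2 ≤ L := by
      rw [div_le_iff₀ (by positivity)]
      have hsq : ((s - 1 / 2 * s⁻¹) * x + 1 / 2 * s⁻¹ * η) ^ 2 ≤ (s * x) ^ 2 :=
        pow_le_pow_left₀ hlb hub 2
      calc ((s - 1 / 2 * s⁻¹) * x + 1 / 2 * s⁻¹ * η) ^ 2 ≤ (s * x) ^ 2 := hsq
        _ = s ^ 2 * x ^ 2 := by ring
        _ = L * x ^ 2 := by rw [hs2]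
    set K := ((s - 1 / 2 * s⁻¹) * x + 1 / 2 * s⁻¹ * η) ^ 2 / x ^ 2 with hKdef
    have hyκ : y * K ≤ y * L := mul_le_mul_of_nonneg_left hκ hy0.le
    clear_value K
    clear hKdef
    by_cases hyη : y ≤ η
    · rw [rhoEta, if_neg (not_le.2 hy0), if_pos hyη]
      have hlogy : L ≤ Real.log (1 / y) := by
        rw [hLdef, one_div, one_div, Real.log_inv, Real.log_inv]
        have := Real.log_le_log hy0 hyη
        linarith
      have h2 : y * L ≤ y * Real.log (1 / y) := mul_le_mul_of_nonneg_left hlogy hy0.le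
      have h3 : 0 ≤ y * Real.log (1 / y) :=
        le_trans (mul_nonneg hy0.le (by linarith)) h2
      calc y * K ≤ y * L := hyκ
        _ ≤ y * Real.log (1 / y) := h2
        _ = 1 * (y * Real.log (1 / y)) := (one_mul _).symm
        _ ≤ C * (y * Real.log (1 / y)) := mul_le_mul_of_nonneg_right hC1 h3
    · push_neg at hyη
      rw [rhoEta, if_neg (not_le.2 hy0), if_neg (not_le.2 hyη)]
      have h2 : C * ((L - 1) * (y - η)) = L * (y - η) := by
        rw [← mul_assoc, hCL]
      have h4 : η * L ≤ C * (η * L) := by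
        calc η * L = 1 * (η * L) := (one_mul _).symm
          _ ≤ C * (η * L) := mul_le_mul_of_nonneg_right hC1
              (mul_nonneg hη₀.le (by linarith))
      have h5 : C * (η * L + (L - 1) * (y - η)) = C * (η * L) + L * (y - η) := by
        rw [mul_add, h2]
      calc y * K ≤ y * L := hyκ
        _ ≤ C * (η * L) + L * (y - η) := by nlinarith
        _ = C * (η * L + (L - 1) * (y - η)) := h5.symm
end
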